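/- Let ℓ ≥ 4, k ≥ 1, and ρ₁, ρ₂ ∈ ℤ nonzero with 2k ≥ ℓ+1 and ρ₁, ρ₂ both odd. Define graded rings R_i = ℤ[x,w]/⟨x^{ℓ+1}, w(w+ρ_i^k x^k)⟩ for i = 1,2 with deg x = 2, deg w = 2k. Then R₁ and R₂ are isomorphic as graded rings: the map x ↦ x, w ↦ a·x^k + w with a = (ρ₂^k − ρ₁^k)/2 ∈ ℤ is a well-defined graded ring isomorphism. -/

import Mathlib

open MvPolynomial

/-- The graded ring `R_i = ℤ[x,w]/⟨x^{ℓ+1}, w(w+ρ^k x^k)⟩`, `deg x = 2`, `deg w = 2k`. -/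
noncomputable def sphereBundleIdeal (ℓ k : ℕ) (ρ : ℤ) : Ideal (MvPolynomial (Fin 2) ℤ) :=
  Ideal.span {X 0 ^ (ℓ + 1), X 1 * (X 1 + C (ρ ^ k) * X 0 ^ k)}

/-- The substitution `x ↦ x`, `w ↦ a x^k + w`. -/
noncomputable def sbSub (k : ℕ) (a : ℤ) :
    MvPolynomial (Fin 2) ℤ →ₐ[ℤ] MvPolynomial (Fin 2) ℤ :=
  aeval ![X 0, C a * X 0 ^ k + X 1]

@[simp] lemma sbSub_X0 (k : ℕ) (a : ℤ) : sbSub k a (X 0) = X 0 := by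
  simp [sbSub]

@[simp] lemma sbSub_X1 (k : ℕ) (a : ℤ) : sbSub k a (X 1) = C a * X 0 ^ k + X 1 := by
  simp [sbSub]

@[simp] lemma sbSub_C (k : ℕ) (a c : ℤ) : sbSub k a (C c) = C c := by
  simp [sbSub, algebraMap_eq]

lemma sb_pow_mem (ℓ k : ℕ) (h2k : ℓ + 1 ≤ 2 * k) (ρ : ℤ) :
    (X 0 : MvPolynomial (Fin 2) ℤ) ^ (2 * k) ∈ sphereBundleIdeal ℓ k ρ := by
  have : 2 * k = (ℓ + 1) + (2 * k - (ℓ + 1)) := by omega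
  rw [this, pow_add]
  exact Ideal.mul_mem_right _ _ (Ideal.subset_span (Or.inl rfl))

lemma sb_key_mem (ℓ k : ℕ) (h2k : ℓ + 1 ≤ 2 * k) (ρ₁ ρ₂ a : ℤ)
    (ha : 2 * a = ρ₂ ^ k - ρ₁ ^ k) :
    (C a * X 0 ^ k + X 1) * ((C a * X 0 ^ k + X 1) + C (ρ₁ ^ k) * X 0 ^ k)
      ∈ sphereBundleIdeal ℓ k ρ₂ := by
  have hC : (C (ρ₂ ^ k) : MvPolynomial (Fin 2) ℤ) = 2 * C a + C (ρ₁ ^ k) := by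
    rw [show (ρ₂ ^ k : ℤ) = 2 * a + ρ₁ ^ k by linarith, C_add, C_mul, map_ofNat]
  have hident : (C a * X 0 ^ k + X 1 : MvPolynomial (Fin 2) ℤ) *
      ((C a * X 0 ^ k + X 1) + C (ρ₁ ^ k) * X 0 ^ k)
      = X 1 * (X 1 + C (ρ₂ ^ k) * X 0 ^ k)
        + (C a * (C a + C (ρ₁ ^ k))) * X 0 ^ (2 * k) := by
    rw [hC]; ring
  rw [hident]
  exact Ideal.add_mem _ (Ideal.subset_span (Or.inr rfl))
    (Ideal.mul_mem_left _ _ (sb_pow_mem ℓ k h2k ρ₂))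

lemma sb_le_ker (ℓ k : ℕ) (h2k : ℓ + 1 ≤ 2 * k) (ρ₁ ρ₂ a : ℤ)
    (ha : 2 * a = ρ₂ ^ k - ρ₁ ^ k) :
    sphereBundleIdeal ℓ k ρ₁ ≤ RingHom.ker
      ((Ideal.Quotient.mk (sphereBundleIdeal ℓ k ρ₂)).comp (sbSub k a).toRingHom) := by
  rw [sphereBundleIdeal, Ideal.span_le]
  rintro p hp
  simp only [Set.mem_insert_iff, Set.mem_singleton_iff] at hp
  rw [SetLike.mem_coe, RingHom.mem_ker, RingHom.comp_apply]
  rcases hp with rfl | rfl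
  · have hval : (sbSub k a).toRingHom (X 0 ^ (ℓ + 1)) = X 0 ^ (ℓ + 1) := by
      simp
    rw [hval, Ideal.Quotient.eq_zero_iff_mem]
    exact Ideal.subset_span (Or.inl rfl)
  · have hval : (sbSub k a).toRingHom (X 1 * (X 1 + C (ρ₁ ^ k) * X 0 ^ k))
        = (C a * X 0 ^ k + X 1) * ((C a * X 0 ^ k + X 1) + C (ρ₁ ^ k) * X 0 ^ k) := by
      simp
    rw [hval, Ideal.Quotient.eq_zero_iff_mem]
    exact sb_key_mem ℓ k h2k ρ₁ ρ₂ a ha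

theorem stmt14 (ℓ k : ℕ) (hℓ : 4 ≤ ℓ) (hk : 1 ≤ k) (h2k : ℓ + 1 ≤ 2 * k)
    (ρ₁ ρ₂ : ℤ) (hρ₁ : ρ₁ ≠ 0) (hρ₂ : ρ₂ ≠ 0) (hodd₁ : Odd ρ₁) (hodd₂ : Odd ρ₂) :
    (2 : ℤ) ∣ ρ₂ ^ k - ρ₁ ^ k ∧
      ∀ a : ℤ, 2 * a = ρ₂ ^ k - ρ₁ ^ k →
        ∃ φ : (MvPolynomial (Fin 2) ℤ ⧸ sphereBundleIdeal ℓ k ρ₁) ≃+*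
            (MvPolynomial (Fin 2) ℤ ⧸ sphereBundleIdeal ℓ k ρ₂),
          φ (Ideal.Quotient.mk _ (X 0)) = Ideal.Quotient.mk _ (X 0) ∧
            φ (Ideal.Quotient.mk _ (X 1)) =
              Ideal.Quotient.mk _ (C a * X 0 ^ k + X 1) := by
  constructor
  · have h1 : Odd (ρ₁ ^ k) := hodd₁.pow
    have h2 : Odd (ρ₂ ^ k) := hodd₂.pow
    exact (h2.sub_odd h1).two_dvd
  · intro a ha
    have ha' : 2 * (-a) = ρ₁ ^ k - ρ₂ ^ k := by linarith
    set I₁ := sphereBundleIdeal ℓ k ρ₁ with hI₁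
    set I₂ := sphereBundleIdeal ℓ k ρ₂ with hI₂
    let F₁ : MvPolynomial (Fin 2) ℤ ⧸ I₁ →+* MvPolynomial (Fin 2) ℤ ⧸ I₂ :=
      Ideal.Quotient.lift I₁ _ (fun x hx => (RingHom.mem_ker).1 (sb_le_ker ℓ k h2k ρ₁ ρ₂ a ha hx))
    let F₂ : MvPolynomial (Fin 2) ℤ ⧸ I₂ →+* MvPolynomial (Fin 2) ℤ ⧸ I₁ :=
      Ideal.Quotient.lift I₂ _ (fun x hx => (RingHom.mem_ker).1 (sb_le_ker ℓ k h2k ρ₂ ρ₁ (-a) ha' hx))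
    have hF₁ : ∀ p, F₁ (Ideal.Quotient.mk I₁ p) = Ideal.Quotient.mk I₂ (sbSub k a p) :=
      fun p => by rw [show F₁ = Ideal.Quotient.lift I₁ _ (fun x hx => (RingHom.mem_ker).1 (sb_le_ker ℓ k h2k ρ₁ ρ₂ a ha hx)) from rfl,
        Ideal.Quotient.lift_mk]; rfl
    have hF₂ : ∀ p, F₂ (Ideal.Quotient.mk I₂ p) = Ideal.Quotient.mk I₁ (sbSub k (-a) p) :=
      fun p => by rw [show F₂ = Ideal.Quotient.lift I₂ _ (fun x hx => (RingHom.mem_ker).1 (sb_le_ker ℓ k h2k ρ₂ ρ₁ (-a) ha' hx)) from rfl,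
        Ideal.Quotient.lift_mk]; rfl
    have hF₁X0 : F₁ (Ideal.Quotient.mk I₁ (X 0)) = Ideal.Quotient.mk I₂ (X 0) := by
      rw [hF₁]; simp
    have hF₁X1 : F₁ (Ideal.Quotient.mk I₁ (X 1)) =
        Ideal.Quotient.mk I₂ (C a * X 0 ^ k + X 1) := by
      rw [hF₁]; simp
    have key₂₁ : ∀ p, sbSub k (-a) (sbSub k a p) = p := by
      intro p
      induction p using MvPolynomial.induction_on with
      | C c => simp
      | add p q hp hq => simp [hp, hq]
      | mul_X p i hp =>
        rw [map_mul, map_mul, hp]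
        congr 1
        fin_cases i
        · show sbSub k (-a) (sbSub k a (X 0)) = X 0
          simp
        · show sbSub k (-a) (sbSub k a (X 1)) = X 1
          simp only [sbSub_X1, map_add, map_mul, map_pow, sbSub_C, sbSub_X0]
          rw [show (C (-a) : MvPolynomial (Fin 2) ℤ) = -C a from by simp]
          ring
    have key₁₂ : ∀ p, sbSub k a (sbSub k (-a) p) = p := by
      intro p
      induction p using MvPolynomial.induction_on with
      | C c => simp
      | add p q hp hq => simp [hp, hq]
      | mul_X p i hp =>
        rw [map_mul, map_mul, hp]
        congr 1
        fin_cases i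
        · show sbSub k a (sbSub k (-a) (X 0)) = X 0
          simp
        · show sbSub k a (sbSub k (-a) (X 1)) = X 1
          simp only [sbSub_X1, map_add, map_mul, map_pow, sbSub_C, sbSub_X0]
          rw [show (C (-a) : MvPolynomial (Fin 2) ℤ) = -C a from by simp]
          ring
    have h21 : F₂.comp F₁ = RingHom.id _ := by
      apply Ideal.Quotient.ringHom_ext
      apply MvPolynomial.ringHom_ext
      · intro c
        simp [RingHom.comp_apply, hF₁, hF₂]
      · intro i
        simp only [RingHom.comp_apply, hF₁, hF₂, key₂₁, RingHom.id_apply]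
    have h12 : F₁.comp F₂ = RingHom.id _ := by
      apply Ideal.Quotient.ringHom_ext
      apply MvPolynomial.ringHom_ext
      · intro c
        simp [RingHom.comp_apply, hF₁, hF₂]
      · intro i
        simp only [RingHom.comp_apply, hF₂, hF₁, key₁₂, RingHom.id_apply]
    exact ⟨RingEquiv.ofRingHom F₁ F₂ h12 h21, hF₁X0, hF₁X1⟩
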